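/- Elimination of Eulerian terms via Eulerian transformation generators (the content of the recursions (3.3)–(3.4) in Lemma 3.2): fix integers s ≥ 1 and l ≥ 1 with l ≠ s, an integer p with 0 ≤ p ≤ s, and real numbers b_p, …, b_s with b_p ≠ 0; set v_s := ∑_{j=p}^{s} b_j·E_{s−j,j}. Then for every choice of real numbers β_p, …, β_{p+l} there exist real numbers c_0, …, c_l and real numbers γ_m for p+l+1 ≤ m ≤ l+s such that [ ∑_{j=0}^{l} c_j·E_{l−j,j} , v_s ] = ∑_{m=p}^{p+l} β_m·E_{l+s−m,m} + ∑_{m=p+l+1}^{l+s} γ_m·E_{l+s−m,m} as maps ℝ⁴ → ℝ⁴. -/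

import Mathlib

/-- Lie bracket of vector fields on ℝ⁴: [V,W](x) = DV(x)(W(x)) − DW(x)(V(x)). -/
noncomputable def bracket (V W : (Fin 4 → ℝ) → (Fin 4 → ℝ)) : (Fin 4 → ℝ) → (Fin 4 → ℝ) :=
  fun x => fderiv ℝ V x (W x) - fderiv ℝ W x (V x)

/-- The Eulerian vector field E₀₀(x) = x. -/
def E00 : (Fin 4 → ℝ) → (Fin 4 → ℝ) := fun x => x

/-- The rotational vector fields Θ¹₀₀(x) = (−y₁, x₁, 0, 0) and Θ²₀₀(x) = (0, 0, −y₂, x₂). -/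
def Theta0 (i : Fin 2) : (Fin 4 → ℝ) → (Fin 4 → ℝ) :=
  if i = 0 then (fun x => ![-(x 1), x 0, 0, 0]) else (fun x => ![0, 0, -(x 3), x 2])

/-- Z_{m,n}(x) = (x₁² + y₁²)^m (x₂² + y₂²)^n. -/
def Z (m n : ℕ) : (Fin 4 → ℝ) → ℝ :=
  fun x => ((x 0) ^ 2 + (x 1) ^ 2) ^ m * ((x 2) ^ 2 + (x 3) ^ 2) ^ n

/-- E_{m,n} = Z_{m,n} · E₀₀. -/
def Emn (m n : ℕ) : (Fin 4 → ℝ) → (Fin 4 → ℝ) := fun x => Z m n x • E00 x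

/-- Θ^i_{m,n} = Z_{m,n} · Θ^i₀₀. -/
def Thmn (i : Fin 2) (m n : ℕ) : (Fin 4 → ℝ) → (Fin 4 → ℝ) := fun x => Z m n x • Theta0 i x

/- ### Auxiliary lemmas -/

lemma pow_pred_mul' (m : ℕ) (r : ℝ) : (m:ℝ) * r^(m-1) * r = m * r^m := by
  cases m with
  | zero => simp
  | succ k => simp [pow_succ]; ring

/-- Derivative of `Emn m n` at `x`, together with its action on multiples of `x`
(Euler's identity for the homogeneous function `Z m n`). -/
lemma Emn_hasFDeriv (m n : ℕ) (x : Fin 4 → ℝ) :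
    ∃ D : (Fin 4 → ℝ) →L[ℝ] (Fin 4 → ℝ), HasFDerivAt (Emn m n) D x ∧
      ∀ t : ℝ, D (t • x) = ((2*((m:ℝ)+(n:ℝ))+1) * t * Z m n x) • x := by
  have h0 := hasFDerivAt_apply (𝕜 := ℝ) (0 : Fin 4) x
  have h1 := hasFDerivAt_apply (𝕜 := ℝ) (1 : Fin 4) x
  have h2 := hasFDerivAt_apply (𝕜 := ℝ) (2 : Fin 4) x
  have h3 := hasFDerivAt_apply (𝕜 := ℝ) (3 : Fin 4) x
  have hq0 := (hasDerivAt_pow 2 (x 0)).comp_hasFDerivAt x h0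
  have hq1 := (hasDerivAt_pow 2 (x 1)).comp_hasFDerivAt x h1
  have hq2 := (hasDerivAt_pow 2 (x 2)).comp_hasFDerivAt x h2
  have hq3 := (hasDerivAt_pow 2 (x 3)).comp_hasFDerivAt x h3
  have hr1 := (hasDerivAt_pow m ((x 0)^2 + (x 1)^2)).comp_hasFDerivAt x (hq0.add hq1)
  have hr2 := (hasDerivAt_pow n ((x 2)^2 + (x 3)^2)).comp_hasFDerivAt x (hq2.add hq3)
  have hZ : HasFDerivAt (Z m n) _ x := hr1.mul hr2
  have hE : HasFDerivAt (Emn m n) _ x := hZ.smul (hasFDerivAt_id x)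
  refine ⟨_, hE, fun t => ?_⟩
  simp only [ContinuousLinearMap.add_apply, ContinuousLinearMap.smul_apply,
    ContinuousLinearMap.smulRight_apply, ContinuousLinearMap.proj_apply,
    ContinuousLinearMap.id_apply, map_smul, smul_eq_mul,
    Z, E00, Pi.smul_apply]
  simp only [Function.comp, pow_one, Pi.add_apply, Function.comp_apply]
  rw [← add_smul, smul_smul]
  congr 1
  have e1 := pow_pred_mul' m ((x 0)^2 + (x 1)^2)
  have e2 := pow_pred_mul' n ((x 2)^2 + (x 3)^2)
  push_cast
  linear_combination (2*t*((x 2)^2+(x 3)^2)^n) * e1 + (2*t*((x 0)^2+(x 1)^2)^m) * e2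

lemma Zmul (a b c d : ℕ) (x : Fin 4 → ℝ) : Z a b x * Z c d x = Z (a+c) (b+d) x := by
  simp only [Z, pow_add]; ring

/-- The recursively defined coefficients solving the triangular system. -/
noncomputable def coeffC (p s : ℕ) (K : ℝ) (b β : ℕ → ℝ) : ℕ → ℝ
  | t =>
    (β (p+t)/K - ∑ k ∈ (Finset.Icc (p+1) (min s (p+t))).attach,
        coeffC p s K b β (p+t-k.1) * b k.1) / b p
  termination_by t => t
  decreasing_by
    have hk := k.2
    simp only [Finset.mem_Icc] at hk
    omega

lemma coeffC_spec (p s l t : ℕ) (K : ℝ) (b β : ℕ → ℝ) (hb : b p ≠ 0) (hK : K ≠ 0)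
    (hp : p ≤ s) (ht : t ≤ l) :
    K * (∑ k ∈ Finset.Icc p s, if (p + t - k ≤ l ∧ k ≤ p + t)
      then coeffC p s K b β (p + t - k) * b k else 0) = β (p + t) := by
  set c := coeffC p s K b β with hc
  have h1 : (∑ k ∈ Finset.Icc p s, if (p + t - k ≤ l ∧ k ≤ p + t)
      then c (p + t - k) * b k else 0)
      = ∑ k ∈ Finset.Icc p (min s (p + t)), c (p + t - k) * b k := by
    rw [← Finset.sum_filter]
    congr 1
    ext k
    simp only [Finset.mem_filter, Finset.mem_Icc]
    omega
  have hpM : p ≤ min s (p + t) := le_min hp (by omega)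
  have h2 : (∑ k ∈ Finset.Icc p (min s (p + t)), c (p + t - k) * b k)
      = c t * b p + ∑ k ∈ Finset.Icc (p+1) (min s (p + t)), c (p + t - k) * b k := by
    rw [← Finset.Ioc_insert_left hpM, Finset.sum_insert (by simp)]
    rw [Finset.Icc_add_one_left_eq_Ioc, show p + t - p = t by omega]
  have h3 : c t = (β (p+t)/K - ∑ k ∈ Finset.Icc (p+1) (min s (p+t)),
      c (p+t-k) * b k) / b p := by
    rw [hc, coeffC, ← Finset.sum_attach (Finset.Icc (p+1) (min s (p+t)))
      (fun k => coeffC p s K b β (p+t-k) * b k)]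
  rw [h1, h2, h3]
  field_simp
  ring

lemma conv_identity (p s l : ℕ) (c b : ℕ → ℝ) (K : ℝ) (x : Fin 4 → ℝ) :
    ∑ m ∈ Finset.Icc p (l+s), (K * (∑ k ∈ Finset.Icc p s,
        if (m - k ≤ l ∧ k ≤ m) then c (m-k) * b k else 0)) * Z (l+s-m) m x
    = K * ((∑ j ∈ Finset.range (l+1), c j * Z (l-j) j x) *
        (∑ k ∈ Finset.Icc p s, b k * Z (s-k) k x)) := by
  have step1 : ∑ m ∈ Finset.Icc p (l+s), (K * (∑ k ∈ Finset.Icc p s,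
        if (m - k ≤ l ∧ k ≤ m) then c (m-k) * b k else 0)) * Z (l+s-m) m x
      = ∑ k ∈ Finset.Icc p s, ∑ m ∈ Finset.Icc p (l+s),
        (if (m - k ≤ l ∧ k ≤ m) then K * (c (m-k) * b k) * Z (l+s-m) m x else 0) := by
    rw [Finset.sum_comm]
    refine Finset.sum_congr rfl fun m _ => ?_
    simp only [Finset.mul_sum, Finset.sum_mul, mul_ite, ite_mul, mul_zero, zero_mul]
  have step2 : K * ((∑ j ∈ Finset.range (l+1), c j * Z (l-j) j x) *
        (∑ k ∈ Finset.Icc p s, b k * Z (s-k) k x))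
      = ∑ k ∈ Finset.Icc p s, ∑ j ∈ Finset.range (l+1),
          K * (c j * Z (l-j) j x * (b k * Z (s-k) k x)) := by
    rw [Finset.sum_mul_sum]
    simp only [Finset.mul_sum]
    rw [Finset.sum_comm]
  rw [step1, step2]
  refine Finset.sum_congr rfl fun k hk => ?_
  simp only [Finset.mem_Icc] at hk
  rw [← Finset.sum_filter]
  have hfil : (Finset.Icc p (l+s)).filter (fun m => m - k ≤ l ∧ k ≤ m)
      = Finset.Icc k (k+l) := by
    ext m
    simp only [Finset.mem_filter, Finset.mem_Icc]
    omega
  rw [hfil, ← Finset.Ico_add_one_right_eq_Icc, Finset.sum_Ico_eq_sum_range,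
    show k+l+1-k = l+1 by omega]
  refine Finset.sum_congr rfl fun j hj => ?_
  simp only [Finset.mem_range] at hj
  rw [show k+j-k = j by omega, show l+s-(k+j) = (l-j)+(s-k) by omega,
    show k+j = j+k by omega, ← Zmul]
  ring

/-- elimination of Eulerian terms via Eulerian transformation generators
(recursions (3.3)–(3.4) in Lemma 3.2). -/
theorem eulerian_elimination (s l p : ℕ) (hs : 1 ≤ s) (hl : 1 ≤ l) (hls : l ≠ s)
    (hp : p ≤ s) (b : ℕ → ℝ) (hb : b p ≠ 0) (β : ℕ → ℝ) :
    ∃ c γ : ℕ → ℝ,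
      bracket (fun x => ∑ j ∈ Finset.range (l + 1), c j • Emn (l - j) j x)
              (fun x => ∑ j ∈ Finset.Icc p s, b j • Emn (s - j) j x) =
      (fun x : Fin 4 → ℝ =>
        (∑ m ∈ Finset.Icc p (p + l), β m • Emn (l + s - m) m x) +
          ∑ m ∈ Finset.Icc (p + l + 1) (l + s), γ m • Emn (l + s - m) m x) := by
  set K : ℝ := 2*((l:ℝ) - (s:ℝ)) with hKdef
  have hK : K ≠ 0 := by
    have : (l:ℝ) ≠ (s:ℝ) := by exact_mod_cast hls
    exact mul_ne_zero two_ne_zero (sub_ne_zero.mpr this)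
  set c : ℕ → ℝ := coeffC p s K b β with hcdef
  set γ : ℕ → ℝ := fun m => K * (∑ k ∈ Finset.Icc p s,
      if (m - k ≤ l ∧ k ≤ m) then c (m-k) * b k else 0) with hγdef
  refine ⟨c, γ, ?_⟩
  funext x
  -- derivatives
  choose DV hDV hDVv using fun j : ℕ => Emn_hasFDeriv (l - j) j x
  choose DW hDW hDWv using fun k : ℕ => Emn_hasFDeriv (s - k) k x
  have hV : HasFDerivAt (fun y => ∑ j ∈ Finset.range (l + 1), c j • Emn (l - j) j y)
      (∑ j ∈ Finset.range (l + 1), c j • DV j) x :=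
    HasFDerivAt.fun_sum fun j _ => (hDV j).const_smul (c j)
  have hW : HasFDerivAt (fun y => ∑ k ∈ Finset.Icc p s, b k • Emn (s - k) k y)
      (∑ k ∈ Finset.Icc p s, b k • DW k) x :=
    HasFDerivAt.fun_sum fun k _ => (hDW k).const_smul (b k)
  set S : ℝ := ∑ j ∈ Finset.range (l+1), c j * Z (l-j) j x with hSdef
  set T : ℝ := ∑ k ∈ Finset.Icc p s, b k * Z (s-k) k x with hTdef
  have hVx : ∑ j ∈ Finset.range (l + 1), c j • Emn (l - j) j x = S • x := by
    simp only [Emn, E00, smul_smul, hSdef]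
    rw [Finset.sum_smul]
  have hWx : ∑ k ∈ Finset.Icc p s, b k • Emn (s - k) k x = T • x := by
    simp only [Emn, E00, smul_smul, hTdef]
    rw [Finset.sum_smul]
  have e1 : (∑ j ∈ Finset.range (l + 1), c j • DV j) (T • x)
      = ((2*(l:ℝ)+1) * T * S) • x := by
    rw [ContinuousLinearMap.sum_apply]
    simp only [ContinuousLinearMap.smul_apply]
    have hterm : ∀ j ∈ Finset.range (l + 1),
        c j • DV j (T • x) = (c j * ((2*(l:ℝ)+1) * T * Z (l-j) j x)) • x := by
      intro j hj
      simp only [Finset.mem_range] at hj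
      rw [hDVv j T, smul_smul]
      have : ((l-j : ℕ):ℝ) + (j:ℝ) = (l:ℝ) := by
        rw [Nat.cast_sub (by omega)]; ring
      rw [this]
    rw [Finset.sum_congr rfl hterm, ← Finset.sum_smul]
    congr 1
    have h2 : ∀ j ∈ Finset.range (l+1), c j * ((2*(l:ℝ)+1)*T*Z (l-j) j x)
        = ((2*(l:ℝ)+1)*T) * (c j * Z (l-j) j x) := fun j _ => by ring
    rw [Finset.sum_congr rfl h2, ← Finset.mul_sum, ← hSdef]
  have e2 : (∑ k ∈ Finset.Icc p s, b k • DW k) (S • x)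
      = ((2*(s:ℝ)+1) * S * T) • x := by
    rw [ContinuousLinearMap.sum_apply]
    simp only [ContinuousLinearMap.smul_apply]
    have hterm : ∀ k ∈ Finset.Icc p s,
        b k • DW k (S • x) = (b k * ((2*(s:ℝ)+1) * S * Z (s-k) k x)) • x := by
      intro k hk
      simp only [Finset.mem_Icc] at hk
      rw [hDWv k S, smul_smul]
      have : ((s-k : ℕ):ℝ) + (k:ℝ) = (s:ℝ) := by
        rw [Nat.cast_sub (by omega)]; ring
      rw [this]
    rw [Finset.sum_congr rfl hterm, ← Finset.sum_smul]
    congr 1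
    have h2 : ∀ k ∈ Finset.Icc p s, b k * ((2*(s:ℝ)+1)*S*Z (s-k) k x)
        = ((2*(s:ℝ)+1)*S) * (b k * Z (s-k) k x) := fun k _ => by ring
    rw [Finset.sum_congr rfl h2, ← Finset.mul_sum, ← hTdef]
  -- compute the bracket
  simp only [bracket]
  rw [hV.fderiv, hW.fderiv, hVx, hWx, e1, e2, ← sub_smul]
  -- compute the right-hand side as a scalar multiple of x
  have hRHS1 : ∑ m ∈ Finset.Icc p (p + l), β m • Emn (l + s - m) m x
      = (∑ m ∈ Finset.Icc p (p + l), β m * Z (l+s-m) m x) • x := by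
    simp only [Emn, E00, smul_smul]
    rw [Finset.sum_smul]
  have hRHS2 : ∑ m ∈ Finset.Icc (p + l + 1) (l + s), γ m • Emn (l + s - m) m x
      = (∑ m ∈ Finset.Icc (p + l + 1) (l + s), γ m * Z (l+s-m) m x) • x := by
    simp only [Emn, E00, smul_smul]
    rw [Finset.sum_smul]
  rw [hRHS1, hRHS2, ← add_smul]
  congr 1
  -- the scalar identity
  have hbeta : ∀ m ∈ Finset.Icc p (p + l),
      β m = K * (∑ k ∈ Finset.Icc p s,
        if (m - k ≤ l ∧ k ≤ m) then c (m-k) * b k else 0) := by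
    intro m hm
    simp only [Finset.mem_Icc] at hm
    have := coeffC_spec p s l (m - p) K b β hb hK hp (by omega)
    rw [show p + (m - p) = m by omega] at this
    rw [← hcdef] at this
    exact this.symm
  have hA : ∑ m ∈ Finset.Icc p (p + l), β m * Z (l+s-m) m x
      = ∑ m ∈ Finset.Icc p (p + l), (K * (∑ k ∈ Finset.Icc p s,
          if (m - k ≤ l ∧ k ≤ m) then c (m-k) * b k else 0)) * Z (l+s-m) m x :=
    Finset.sum_congr rfl fun m hm => by rw [← hbeta m hm]
  have hB : ∑ m ∈ Finset.Icc (p + l + 1) (l + s), γ m * Z (l+s-m) m x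
      = ∑ m ∈ Finset.Icc (p + l + 1) (l + s), (K * (∑ k ∈ Finset.Icc p s,
          if (m - k ≤ l ∧ k ≤ m) then c (m-k) * b k else 0)) * Z (l+s-m) m x :=
    Finset.sum_congr rfl fun m _ => by rw [hγdef]
  rw [hA, hB]
  have hunion : Finset.Icc p (p + l) ∪ Finset.Icc (p + l + 1) (l + s)
      = Finset.Icc p (l + s) := by
    ext m
    simp only [Finset.mem_union, Finset.mem_Icc]
    omega
  have hdisj : Disjoint (Finset.Icc p (p + l)) (Finset.Icc (p + l + 1) (l + s)) := by
    rw [Finset.disjoint_left]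
    intro m hm hm'
    simp only [Finset.mem_Icc] at hm hm'
    omega
  rw [← Finset.sum_union hdisj, hunion, conv_identity p s l c b K x]
  rw [hKdef]
  ring
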